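/- For the cycle C_n on n ≥ 3 vertices, γ_R(C_n) = ⌈2n/3⌉. -/

import Mathlib

open SimpleGraph Finset

/-- A Roman dominating function: values in {0,1,2}, every 0-vertex has a neighbor with value 2. -/
def IsRDF {V : Type*} (G : SimpleGraph V) (f : V → ℕ) : Prop :=
  (∀ v, f v ≤ 2) ∧ ∀ v, f v = 0 → ∃ u, G.Adj v u ∧ f u = 2

/-- The Roman domination number: minimum weight of a Roman dominating function. -/
noncomputable def romanDom {V : Type*} [Fintype V] (G : SimpleGraph V) : ℕ :=
  sInf {k | ∃ f : V → ℕ, IsRDF G f ∧ ∑ v, f v = k}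

/-- A dominating set. -/
def IsDomSet {V : Type*} (G : SimpleGraph V) (S : Set V) : Prop :=
  ∀ v, v ∈ S ∨ ∃ u ∈ S, G.Adj u v

/-- The domination number. -/
noncomputable def domNum {V : Type*} [Fintype V] (G : SimpleGraph V) : ℕ :=
  sInf {k | ∃ S : Set V, IsDomSet G S ∧ S.ncard = k}

/-- Degree of a vertex. -/
noncomputable def deg {V : Type*} (G : SimpleGraph V) (v : V) : ℕ :=
  (G.neighborSet v).ncard

/-- Maximum degree. -/
noncomputable def maxDeg {V : Type*} (G : SimpleGraph V) : ℕ :=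
  sSup {d | ∃ v, deg G v = d}

/-- Minimum degree. -/
noncomputable def minDeg {V : Type*} (G : SimpleGraph V) : ℕ :=
  sInf {d | ∃ v, deg G v = d}

/-- The Roman bondage number: minimum size of an edge set whose deletion increases `romanDom`. -/
noncomputable def romanBondage {V : Type*} [Fintype V] (G : SimpleGraph V) : ℕ :=
  sInf {k | ∃ B : Set (Sym2 V), B ⊆ G.edgeSet ∧
    romanDom (G.deleteEdges B) > romanDom G ∧ B.ncard = k}

/-- The bondage number: minimum size of an edge set whose deletion increases `domNum`. -/
noncomputable def bondage {V : Type*} [Fintype V] (G : SimpleGraph V) : ℕ :=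
  sInf {k | ∃ B : Set (Sym2 V), B ⊆ G.edgeSet ∧
    domNum (G.deleteEdges B) > domNum G ∧ B.ncard = k}

/-- A vertex cover. -/
def IsVC {V : Type*} (G : SimpleGraph V) (S : Set V) : Prop :=
  ∀ u v, G.Adj u v → u ∈ S ∨ v ∈ S

/-- The vertex covering number. -/
noncomputable def vcNum {V : Type*} [Fintype V] (G : SimpleGraph V) : ℕ :=
  sInf {k | ∃ S : Set V, IsVC G S ∧ S.ncard = k}

lemma val_succ {n : ℕ} [NeZero n] (v : Fin n) : (v + 1).val = (v.val + 1) % n := by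
  rw [Fin.val_add, Fin.val_one', Nat.add_mod_mod]

lemma adj_succ {n : ℕ} [NeZero n] (hn : 3 ≤ n) (u : Fin n) : (cycleGraph n).Adj u (u + 1) := by
  rw [cycleGraph_adj']
  right
  have h : u + 1 - u = (1 : Fin n) := by abel
  rw [h, Fin.val_one']
  exact Nat.mod_eq_of_lt (by omega)

lemma sum_base (m : ℕ) :
    ∑ i ∈ Finset.range m, (if i % 3 = 0 then 2 else 0) = 2 * ((m + 2) / 3) := by
  induction m with
  | zero => simp
  | succ m ih =>
    rw [Finset.sum_range_succ, ih]
    split <;> omega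

def rf (n i : ℕ) : ℕ :=
  if n % 3 = 1 then
    (if i + 1 = n then 0 else if i + 2 = n then 1 else if i % 3 = 0 then 2 else 0)
  else (if i % 3 = 0 then 2 else 0)

lemma rf_sum {n : ℕ} (hn : 3 ≤ n) :
    ∑ i ∈ Finset.range n, rf n i = (2 * n + 2) / 3 := by
  by_cases h1 : n % 3 = 1
  · obtain ⟨m, rfl⟩ : ∃ m, n = m + 2 := ⟨n - 2, by omega⟩
    rw [Finset.sum_range_succ, Finset.sum_range_succ]
    have hm : ∀ i ∈ Finset.range m, rf (m+2) i = (if i % 3 = 0 then 2 else 0) := by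
      intro i hi
      simp only [Finset.mem_range] at hi
      unfold rf
      rw [if_pos h1, if_neg (by omega), if_neg (by omega)]
    rw [Finset.sum_congr rfl hm, sum_base]
    have hv1 : rf (m+2) m = 1 := by
      unfold rf; rw [if_pos h1, if_neg (by omega), if_pos (by omega)]
    have hv2 : rf (m+2) (m+1) = 0 := by
      unfold rf; rw [if_pos h1, if_pos (by omega)]
    rw [hv1, hv2]
    omega
  · have hm : ∀ i ∈ Finset.range n, rf n i = (if i % 3 = 0 then 2 else 0) := by
      intro i _; unfold rf; rw [if_neg h1]
    rw [Finset.sum_congr rfl hm, sum_base]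
    omega

lemma pred_succ_eq {n : ℕ} [NeZero n] (v : Fin n) (hv : 1 ≤ v.val) :
    (⟨v.val - 1, by omega⟩ : Fin n) + 1 = v := by
  apply Fin.ext
  rw [val_succ]
  simp only
  rw [Nat.sub_add_cancel hv]
  exact Nat.mod_eq_of_lt v.isLt

lemma adj_pred {n : ℕ} [NeZero n] (hn : 3 ≤ n) (u v : Fin n) (h : u + 1 = v) :
    (cycleGraph n).Adj v u := h ▸ (adj_succ hn u).symm

lemma rf_rdf {n : ℕ} [NeZero n] (hn : 3 ≤ n) : IsRDF (cycleGraph n) (fun v => rf n v.val) := by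
  constructor
  · intro v; simp only [rf]; split_ifs <;> omega
  · intro v hv
    simp only [rf] at hv ⊢
    have hvn : v.val < n := v.isLt
    by_cases h1 : n % 3 = 1
    · rw [if_pos h1] at hv
      split_ifs at hv with ha hb hc
      · -- v.val + 1 = n : use v + 1 which has val 0
        refine ⟨v + 1, adj_succ hn v, ?_⟩
        have hval : (v + 1).val = 0 := by rw [val_succ, ha, Nat.mod_self]
        rw [hval, if_pos h1, if_neg (by omega), if_neg (by omega), if_pos (by omega)]
      · -- i % 3 = 1 or 2
        rcases Nat.lt_or_ge (v.val % 3) 2 with h2 | h2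
        · -- v.val % 3 = 1 : use predecessor
          have hmod : v.val % 3 = 1 := by omega
          refine ⟨⟨v.val - 1, by omega⟩, adj_pred hn _ v (pred_succ_eq v (by omega)), ?_⟩
          simp only
          rw [if_pos h1, if_neg (by omega), if_neg (by omega), if_pos (by omega)]
        · -- v.val % 3 = 2 : use successor
          have hmod : v.val % 3 = 2 := by omega
          refine ⟨v + 1, adj_succ hn v, ?_⟩
          have hval : (v + 1).val = v.val + 1 := by
            rw [val_succ]; exact Nat.mod_eq_of_lt (by omega)
          rw [hval, if_pos h1, if_neg (by omega), if_neg (by omega), if_pos (by omega)]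
    · rw [if_neg h1] at hv
      split_ifs at hv with hc
      rcases Nat.lt_or_ge (v.val % 3) 2 with h2 | h2
      · have hmod : v.val % 3 = 1 := by omega
        refine ⟨⟨v.val - 1, by omega⟩, adj_pred hn _ v (pred_succ_eq v (by omega)), ?_⟩
        simp only
        rw [if_neg h1, if_pos (by omega)]
      · have hmod : v.val % 3 = 2 := by omega
        refine ⟨v + 1, adj_succ hn v, ?_⟩
        by_cases hlt : v.val + 1 < n
        · have hval : (v + 1).val = v.val + 1 := by
            rw [val_succ]; exact Nat.mod_eq_of_lt hlt
          rw [hval, if_neg h1, if_pos (by omega)]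
        · have hval : (v + 1).val = 0 := by
            rw [val_succ]
            have h3 : v.val + 1 = n := by omega
            rw [h3, Nat.mod_self]
          rw [hval, if_neg h1, if_pos (by omega)]

theorem stmt13 (n : ℕ) (hn : 3 ≤ n) :
    romanDom (SimpleGraph.cycleGraph n) = (2 * n + 2) / 3 := by
  haveI : NeZero n := ⟨by omega⟩
  classical
  have hmem : (2 * n + 2) / 3 ∈
      {k | ∃ f : Fin n → ℕ, IsRDF (cycleGraph n) f ∧ ∑ v, f v = k} := by
    refine ⟨fun v => rf n v.val, rf_rdf hn, ?_⟩
    rw [Fin.sum_univ_eq_sum_range (fun i => rf n i) n]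
    exact rf_sum hn
  rw [romanDom]
  refine le_antisymm (Nat.sInf_le hmem) (le_csInf ⟨_, hmem⟩ ?_)
  rintro k ⟨f, ⟨hf2, hfdom⟩, rfl⟩
  set V0 := Finset.univ.filter (fun v : Fin n => f v = 0) with hV0def
  set V1 := Finset.univ.filter (fun v : Fin n => f v = 1) with hV1def
  set V2 := Finset.univ.filter (fun v : Fin n => f v = 2) with hV2def
  have hcard : V0.card + V1.card + V2.card = n := by
    rw [hV0def, hV1def, hV2def, Finset.card_filter, Finset.card_filter, Finset.card_filter,
      ← Finset.sum_add_distrib, ← Finset.sum_add_distrib]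
    have h1 : ∀ v : Fin n, (((if f v = 0 then 1 else 0) + if f v = 1 then 1 else 0) +
        if f v = 2 then 1 else 0) = 1 := by
      intro v; have := hf2 v; split_ifs <;> omega
    rw [Finset.sum_congr rfl (fun v _ => h1 v)]
    simp
  have hk : V1.card + 2 * V2.card ≤ ∑ v, f v := by
    have hle : ∀ v : Fin n, ((if f v = 1 then 1 else 0) + if f v = 2 then 2 else 0) ≤ f v := by
      intro v; have := hf2 v; split_ifs <;> omega
    calc V1.card + 2 * V2.card
        = ∑ v, ((if f v = 1 then 1 else 0) + if f v = 2 then 2 else 0) := by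
          rw [Finset.sum_add_distrib, hV1def, hV2def, Finset.card_filter, Finset.card_filter,
            Finset.mul_sum]
          congr 1
          apply Finset.sum_congr rfl
          intro v _
          split_ifs <;> simp
      _ ≤ ∑ v, f v := Finset.sum_le_sum (fun v _ => hle v)
  have hdom : V0.card ≤ 2 * V2.card := by
    set g : Fin n → Fin n :=
      fun v => if h : f v = 0 then Classical.choose (hfdom v h) else v with hgdef
    have hg : ∀ v : Fin n, f v = 0 → (cycleGraph n).Adj v (g v) ∧ f (g v) = 2 := by
      intro v h
      rw [hgdef]
      simp only [dif_pos h]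
      exact Classical.choose_spec (hfdom v h)
    have himg : V0.image g ⊆ V2 := by
      intro u hu
      simp only [Finset.mem_image] at hu
      obtain ⟨v, hv, rfl⟩ := hu
      simp only [hV0def, Finset.mem_filter] at hv
      simp only [hV2def, Finset.mem_filter]
      exact ⟨Finset.mem_univ _, (hg v hv.2).2⟩
    have hfib : ∀ a ∈ V0.image g, (V0.filter (fun x => g x = a)).card ≤ 2 := by
      intro a _
      have h1v : ((1 : Fin n) : ℕ) = 1 := by
        rw [Fin.val_one']; exact Nat.mod_eq_of_lt (by omega)
      have hsub : V0.filter (fun x => g x = a) ⊆ {a - 1, a + 1} := by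
        intro v hv
        simp only [Finset.mem_filter, hV0def] at hv
        obtain ⟨⟨_, hv0⟩, hga⟩ := hv
        have hadj := (hg v hv0).1
        rw [hga, cycleGraph_adj'] at hadj
        simp only [Finset.mem_insert, Finset.mem_singleton]
        rcases hadj with h | h
        · right
          have h2 : v - a = 1 := Fin.ext (by rw [h1v]; exact h)
          have h3 := sub_eq_iff_eq_add.mp h2
          rw [h3, add_comm]
        · left
          have h2 : a - v = 1 := Fin.ext (by rw [h1v]; exact h)
          have h3 := sub_eq_iff_eq_add.mp h2
          rw [h3]; abel
      calc (V0.filter (fun x => g x = a)).card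
          ≤ ({a - 1, a + 1} : Finset (Fin n)).card := Finset.card_le_card hsub
        _ ≤ 2 := (Finset.card_insert_le _ _).trans (by simp)
    calc V0.card ≤ 2 * (V0.image g).card := Finset.card_le_mul_card_image V0 2 hfib
      _ ≤ 2 * V2.card := Nat.mul_le_mul_left 2 (Finset.card_le_card himg)
  omega
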